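/- Let Γ be a finite abelian group of prime-power order p^m and exponent q, let A be a Dedekind order (the ring of integers of a number field) with a Γ-grading (B_γ)_{γ∈Γ} such that each B_γ ⊗ ℚ is one-dimensional over the field B_1 ⊗ ℚ. Then Γ is cyclic. -/

import Mathlib

set_option linter.unusedSectionVars false

/-- A `Γ`-grading of a commutative ring `A`: a family of additive subgroups
`B γ` with `B γ * B δ ⊆ B (γ*δ)` such that every element of `A` has a unique
finitely-supported decomposition into homogeneous components. -/
def IsGrading {A Γ : Type*} [CommRing A] [CommGroup Γ] (B : Γ → AddSubgroup A) : Prop :=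
  (∀ γ δ : Γ, ∀ x ∈ B γ, ∀ y ∈ B δ, x * y ∈ B (γ * δ)) ∧
  (∀ a : A, ∃! f : Γ →₀ A, (∀ γ, f γ ∈ B γ) ∧ f.sum (fun _ x => x) = a)

open Module in
open Ideal UniqueFactorizationMonoid Multiset in
theorem exists_root_ideal {A : Type*} [CommRing A] [IsDomain A] [IsDedekindDomain A]
    (I : Ideal A) (hI : I ≠ ⊥) (q : ℕ) (hq : 0 < q) :
    ∃ J : Ideal A, I ∣ J ^ q ∧ ∀ x : A, x ^ q ∈ I → x ∈ J := by
  classical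
  set F := normalizedFactors I with hF
  have hceil : ∀ n : ℕ, n ≤ q * ((n + q - 1) / q) := by
    intro n
    have h1 := Nat.div_add_mod (n + q - 1) q
    have h2 : (n + q - 1) % q < q := Nat.mod_lt _ hq
    omega
  set J : Ideal A := ∏ P ∈ F.toFinset, P ^ ((F.count P + q - 1) / q) with hJdef
  have hIF : I = ∏ P ∈ F.toFinset, P ^ F.count P := by
    conv_lhs => rw [← _root_.prod_normalizedFactors_eq_self hI]
    exact Finset.prod_multiset_count F
  refine ⟨J, ?_, ?_⟩
  · rw [hJdef, ← Finset.prod_pow]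
    conv_lhs => rw [hIF]
    refine Finset.prod_dvd_prod_of_dvd _ _ fun P hP => ?_
    rw [← pow_mul]
    exact pow_dvd_pow _ ((hceil _).trans (le_of_eq (mul_comm _ _)))
  · intro x hx
    by_cases hx0 : x = 0
    · simp [hx0]
    have hxspan : (span {x} : Ideal A) ≠ ⊥ := by
      simpa [Ne, span_singleton_eq_bot] using hx0
    have hdvd : I ∣ span {x} ^ q := by
      rw [span_singleton_pow, dvd_iff_le, span_singleton_le_iff_mem]
      exact hx
    rw [← Ideal.span_singleton_le_iff_mem, ← Ideal.dvd_iff_le, hJdef]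
    refine Finset.prod_dvd_of_coprime ?_ ?_
    · intro P hP Q hQ hne
      have hPm : (P : Ideal A).IsMaximal :=
        (Ideal.isPrime_of_prime (prime_of_normalized_factor P (Multiset.mem_toFinset.mp hP))).isMaximal
          (prime_of_normalized_factor P (Multiset.mem_toFinset.mp hP)).ne_zero
      have hQm : (Q : Ideal A).IsMaximal :=
        (Ideal.isPrime_of_prime (prime_of_normalized_factor Q (Multiset.mem_toFinset.mp hQ))).isMaximal
          (prime_of_normalized_factor Q (Multiset.mem_toFinset.mp hQ)).ne_zero
      exact (Ideal.isCoprime_iff_sup_eq.mpr (hPm.coprime_of_ne hQm hne)).pow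
    · intro P hP
      have hPprime : Prime P := prime_of_normalized_factor P (Multiset.mem_toFinset.mp hP)
      have hcount : F.count P ≤ q * (normalizedFactors (span {x})).count P := by
        have hle : F ≤ normalizedFactors (span {x} ^ q) :=
          (dvd_iff_normalizedFactors_le_normalizedFactors hI (pow_ne_zero _ hxspan)).mp hdvd
        have := Multiset.le_iff_count.mp hle P
        rwa [normalizedFactors_pow, Multiset.count_nsmul] at this
      have hm : (F.count P + q - 1) / q ≤ (normalizedFactors (span {x})).count P := by
        rw [Nat.div_le_iff_le_mul_add_pred hq]
        have := hcount
        omega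
      refine dvd_trans (pow_dvd_pow _ hm) ?_
      refine pow_dvd_of_le_emultiplicity ?_
      rw [emultiplicity_eq_count_normalizedFactors hPprime.irreducible hxspan, normalize_eq P]

section GradingBasics
variable {A Γ : Type*} [CommRing A] [CommGroup Γ] [Fintype Γ] {B : Γ → AddSubgroup A}
  (hB : IsGrading B)

include hB in
theorem grading_exists (a : A) : ∃ g : Γ → A, (∀ γ, g γ ∈ B γ) ∧ ∑ γ, g γ = a := by
  obtain ⟨f, ⟨hf1, hf2⟩, -⟩ := hB.2 a
  refine ⟨f, hf1, ?_⟩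
  rw [← hf2, Finsupp.sum_fintype]
  intro; rfl

include hB in
theorem grading_unique {g h : Γ → A} (hg : ∀ γ, g γ ∈ B γ) (hh : ∀ γ, h γ ∈ B γ)
    (heq : ∑ γ, g γ = ∑ γ, h γ) : g = h := by
  obtain ⟨f, -, hf⟩ := hB.2 (∑ γ, g γ)
  have e1 : Finsupp.equivFunOnFinite.symm g = f := by
    refine hf _ ⟨by simpa using hg, ?_⟩
    rw [Finsupp.sum_fintype _ _ (fun _ => rfl)]
    simp
  have e2 : Finsupp.equivFunOnFinite.symm h = f := by
    refine hf _ ⟨by simpa using hh, ?_⟩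
    rw [Finsupp.sum_fintype _ _ (fun _ => rfl)]
    simpa using heq.symm
  have := e1.trans e2.symm
  simpa using congrArg (Finsupp.equivFunOnFinite) this

omit [Fintype Γ] in
include hB in
theorem grading_pow {γ : Γ} {x : A} (hx : x ∈ B γ) (n : ℕ) (hn : 0 < n) : x ^ n ∈ B (γ ^ n) := by
  induction n with
  | zero => omega
  | succ n ih =>
    rcases Nat.eq_zero_or_pos n with h | h
    · subst h; simpa using hx
    · rw [pow_succ, pow_succ]
      exact hB.1 _ _ _ (ih h) _ hx

end GradingBasics

section GradingRank
open Module

variable {A Γ : Type*} [CommRing A] [IsDomain A] [Module.Free ℤ A] [Module.Finite ℤ A]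
  [CommGroup Γ] [Fintype Γ] {B : Γ → AddSubgroup A} (hB : IsGrading B)


include hB in
theorem grading_finrank_piece (hne : ∀ γ, ∃ x ∈ B γ, x ≠ 0) (γ : Γ) :
    finrank ℤ ((B γ).toIntSubmodule) = finrank ℤ ((B 1).toIntSubmodule) := by
  have key : ∀ γ δ : Γ, finrank ℤ ((B γ).toIntSubmodule) ≤ finrank ℤ ((B (γ * δ)).toIntSubmodule) := by
    intro γ δ
    obtain ⟨x, hx, hx0⟩ := hne δ
    have hinj : Function.Injective (fun v : (B γ).toIntSubmodule =>
        (⟨v * x, hB.1 _ _ _ v.2 _ hx⟩ : (B (γ * δ)).toIntSubmodule)) := by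
      intro v w h
      have := congrArg (Subtype.val) h
      simp only at this
      exact Subtype.ext (mul_right_cancel₀ hx0 this)
    exact LinearMap.finrank_le_finrank_of_injective
      (f := { toFun := fun v : (B γ).toIntSubmodule =>
                (⟨v * x, hB.1 _ _ _ v.2 _ hx⟩ : (B (γ * δ)).toIntSubmodule),
              map_add' := fun v w => by ext; simp [add_mul],
              map_smul' := fun z v => by ext; simp [smul_mul_assoc, mul_assoc] }) hinj
  have h1 : finrank ℤ ((B γ).toIntSubmodule) ≤ finrank ℤ ((B 1).toIntSubmodule) := by
    have := key γ γ⁻¹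
    rwa [mul_inv_cancel] at this
  have h2 : finrank ℤ ((B 1).toIntSubmodule) ≤ finrank ℤ ((B γ).toIntSubmodule) := by
    have := key 1 γ
    rwa [one_mul] at this
  omega

include hB in
theorem grading_finrank (hne : ∀ γ, ∃ x ∈ B γ, x ≠ 0) :
    finrank ℤ A = Fintype.card Γ * finrank ℤ ((B 1).toIntSubmodule) := by
  classical
  set T : (∀ γ : Γ, (B γ).toIntSubmodule) →ₗ[ℤ] A :=
    { toFun := fun g => ∑ γ, (g γ : A),
      map_add' := fun g h => by simp [Finset.sum_add_distrib],
      map_smul' := fun z g => by simp [Finset.smul_sum] } with hT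
  have hbij : Function.Bijective T := by
    constructor
    · intro g h hgh
      have := grading_unique hB (g := fun γ => (g γ : A)) (h := fun γ => (h γ : A))
        (fun γ => (g γ).2) (fun γ => (h γ).2) hgh
      funext γ
      exact Subtype.ext (congrFun this γ)
    · intro a
      obtain ⟨g, hg, hsum⟩ := grading_exists hB a
      exact ⟨fun γ => ⟨g γ, hg γ⟩, hsum⟩
  have := (LinearEquiv.ofBijective T hbij).finrank_eq
  rw [← this, finrank_pi_fintype]
  rw [Finset.sum_congr rfl (fun γ _ => grading_finrank_piece hB hne γ)]
  simp [Finset.sum_const, Finset.card_univ, mul_comm]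


end GradingRank

open Module in
theorem grading_group_cyclic_of_dedekind {A Γ : Type*} [CommRing A] [IsDomain A]
    [IsDedekindDomain A] [Module.Free ℤ A] [Module.Finite ℤ A]
    [CommGroup Γ] [Fintype Γ]
    (p m q : ℕ) (hp : p.Prime) (hcard : Fintype.card Γ = p ^ m)
    (hq : Monoid.exponent Γ = q)
    (B : Γ → AddSubgroup A) (hB : IsGrading B)
    (hdim : ∀ γ : Γ, ∃ x ∈ B γ, x ≠ 0 ∧
      ∀ y ∈ B γ, ∃ b ∈ B 1, ∃ n : ℤ, n ≠ 0 ∧ n • y = b * x) :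
    IsCyclic Γ := by
  classical
  haveI : Fact p.Prime := ⟨hp⟩
  -- basic numerology
  have hq0 : 0 < q := hq ▸ Nat.pos_of_ne_zero Monoid.exponent_ne_zero_of_finite
  have hqdvd : q ∣ Fintype.card Γ := hq ▸ Group.exponent_dvd_card
  obtain ⟨k, hkm, hqpk⟩ := (Nat.dvd_prime_pow hp).mp (hcard ▸ hqdvd)
  set N := Fintype.card Γ with hN
  have hN0 : 0 < N := Fintype.card_pos
  have hne : ∀ γ, ∃ x ∈ B γ, x ≠ 0 := fun γ => by
    obtain ⟨x, hx, hx0, -⟩ := hdim γ; exact ⟨x, hx, hx0⟩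
  set r := finrank ℤ ((B 1).toIntSubmodule) with hr
  have hrank : finrank ℤ A = N * r := grading_finrank hB hne
  have hr0 : 0 < r := by
    obtain ⟨x, hx, hx0⟩ := hne 1
    have : Nontrivial ((B 1).toIntSubmodule) :=
      ⟨⟨⟨x, hx⟩, 0, by simp [Subtype.ext_iff, hx0]⟩⟩
    exact Module.finrank_pos
  -- the ideal I = pA
  set I : Ideal A := Ideal.span {(p : A)} with hI
  have hnormI : Ideal.absNorm I = p ^ (N * r) := by
    rw [hI, Ideal.absNorm_span_singleton]
    have : (p : A) = algebraMap ℤ A (p : ℤ) := by simp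
    rw [this, Algebra.norm_algebraMap_of_basis (Module.Free.chooseBasis ℤ A),
      ← Module.finrank_eq_card_chooseBasisIndex, hrank]
    simp [Int.natAbs_pow]
  have hpow0 : (p : ℕ) ^ (N * r) ≠ 0 := pow_ne_zero _ hp.pos.ne'
  have hI0 : I ≠ ⊥ := by
    intro h
    rw [h, Ideal.absNorm_eq_zero_iff.mpr rfl] at hnormI
    exact hpow0 hnormI.symm
  have hInetop : (p : A) ∈ nonunits A := by
    intro hu
    have : I = ⊤ := Ideal.span_singleton_eq_top.mpr hu
    rw [this, Ideal.absNorm_top] at hnormI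
    have : p ^ (N * r) = 1 := hnormI.symm
    have := hp.one_lt
    have hnr : 0 < N * r := Nat.mul_pos hN0 hr0
    nlinarith [Nat.one_lt_pow hnr.ne' hp.one_lt]
  -- the quotient ring R
  set R := A ⧸ I with hR
  have hcardR : Nat.card R = p ^ (N * r) := by
    rw [← hnormI, Ideal.absNorm_apply, Submodule.cardQuot_apply]
  haveI : Finite R := Nat.finite_of_card_ne_zero (by rw [hcardR]; exact hpow0)
  haveI hcharR : CharP R p := CharP.quotient A p hInetop
  -- Frobenius-type map
  set φ : R →+ R :=
    { toFun := fun x => x ^ q,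
      map_zero' := zero_pow hq0.ne',
      map_add' := fun x y => by
        show (x + y) ^ q = x ^ q + y ^ q
        rw [hqpk]; exact add_pow_char_pow x y p k } with hφ
  -- image of B 1 in R
  set mkI : A →+* R := Ideal.Quotient.mk I with hmkI
  set Sbar : AddSubgroup R := (B 1).map mkI.toAddMonoidHom with hSbar
  have hrange : φ.range ≤ Sbar := by
    rintro _ ⟨x, rfl⟩
    obtain ⟨a, rfl⟩ := Ideal.Quotient.mk_surjective (I := I) x
    obtain ⟨g, hg, hsum⟩ := grading_exists hB a
    have : (mkI a : R) = ∑ γ, mkI (g γ) := by rw [← map_sum, hsum]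
    rw [show (φ (mkI a) : R) = ∑ γ, φ (mkI (g γ)) by rw [this, map_sum]]
    refine AddSubgroup.sum_mem _ fun γ _ => ?_
    have hpowmem : (g γ) ^ q ∈ B 1 := by
      have h2 := grading_pow hB (hg γ) q hq0
      have h1 : γ ^ q = 1 := by rw [← hq]; exact Monoid.pow_exponent_eq_one γ
      rwa [h1] at h2
    exact ⟨(g γ) ^ q, hpowmem, by simp [hφ, map_pow]⟩
  -- the root ideal J
  obtain ⟨J, hJdvd, hJroot⟩ := exists_root_ideal I hI0 q hq0
  have hIJ : I ≤ J := fun x hx => hJroot x (Ideal.pow_mem_of_mem _ hx q hq0)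
  have hJ0 : J ≠ ⊥ := fun h => hI0 (le_bot_iff.mp (h ▸ hIJ))
  set π : R →+* A ⧸ J := Ideal.Quotient.factor hIJ with hπ
  have hπsurj : Function.Surjective π := by
    intro y
    obtain ⟨a, rfl⟩ := Ideal.Quotient.mk_surjective y
    exact ⟨mkI a, Ideal.Quotient.factor_mk hIJ a⟩
  -- counting
  have hcount1 : Nat.card R = Nat.card φ.range * Nat.card φ.ker := by
    rw [AddSubgroup.card_eq_card_quotient_mul_card_addSubgroup φ.ker]
    congr 1
    exact Nat.card_congr (QuotientAddGroup.quotientKerEquivRange φ).toEquiv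
  have hcount2 : Nat.card R = Ideal.absNorm J * Nat.card π.toAddMonoidHom.ker := by
    rw [AddSubgroup.card_eq_card_quotient_mul_card_addSubgroup π.toAddMonoidHom.ker]
    congr 1
    rw [Ideal.absNorm_apply, Submodule.cardQuot_apply]
    refine Nat.card_congr ?_
    exact (QuotientAddGroup.quotientKerEquivRange π.toAddMonoidHom).toEquiv.trans
      (Equiv.subtypeUnivEquiv (by
        intro y
        obtain ⟨x, hx⟩ := hπsurj y
        exact ⟨x, hx⟩))
  have hkerle : φ.ker ≤ π.toAddMonoidHom.ker := by
    intro x hx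
    obtain ⟨a, rfl⟩ := Ideal.Quotient.mk_surjective (I := I) x
    have hxq : a ^ q ∈ I := by
      have : (mkI a) ^ q = 0 := hx
      rwa [← map_pow, Ideal.Quotient.eq_zero_iff_mem] at this
    have haJ : a ∈ J := hJroot a hxq
    show π (mkI a) = 0
    rw [hπ, Ideal.Quotient.factor_mk, Ideal.Quotient.eq_zero_iff_mem]
    exact haJ
  have hkercard : Nat.card φ.ker ≤ Nat.card π.toAddMonoidHom.ker :=
    AddSubgroup.card_le_of_le hkerle
  have hnormJq : p ^ (N * r) ≤ Ideal.absNorm J ^ q := by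
    have : Ideal.absNorm I ∣ Ideal.absNorm (J ^ q) := map_dvd Ideal.absNorm hJdvd
    rw [map_pow, hnormI] at this
    exact Nat.le_of_dvd (Nat.pos_of_ne_zero (pow_ne_zero _
      (fun h => hJ0 (Ideal.absNorm_eq_zero_iff.mp h)))) this
  -- bound on the image: Nat.card Sbar ≤ p ^ r
  have hSbarcard : Nat.card Sbar ≤ p ^ r := by
    haveI : Module (ZMod p) R := AddCommGroup.zmodModule (n := p) (by
      intro x
      obtain ⟨a, rfl⟩ := Ideal.Quotient.mk_surjective (I := I) x
      show (p : ℕ) • (mkI a) = 0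
      rw [← map_nsmul, Ideal.Quotient.eq_zero_iff_mem]
      have : (p : ℕ) • a = (p : A) * a := by simp [nsmul_eq_mul]
      rw [this]
      exact Ideal.mul_mem_right _ _ (Ideal.subset_span rfl))
    set b := Module.Free.chooseBasis ℤ ((B 1).toIntSubmodule) with hb
    set g : Module.Free.ChooseBasisIndex ℤ ((B 1).toIntSubmodule) → R :=
      fun i => mkI ((b i : (B 1).toIntSubmodule) : A) with hg
    have hle : ∀ s ∈ Sbar, s ∈ Submodule.span (ZMod p) (Set.range g) := by
      rintro _ ⟨x, hx, rfl⟩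
      have hrepr := Basis.sum_repr b ⟨x, hx⟩
      have hxeq : x = ∑ i, (b.repr ⟨x, hx⟩ i) • (((b i) : (B 1).toIntSubmodule) : A) := by
        have h2 := congrArg (((B 1).toIntSubmodule).subtype) hrepr
        simp only [map_sum, map_smul, Submodule.subtype_apply] at h2
        exact h2.symm
      have heq2 : mkI x = ∑ i, (b.repr ⟨x, hx⟩ i) • mkI (((b i) : (B 1).toIntSubmodule) : A) := by
        conv_lhs => rw [hxeq]
        rw [map_sum]
        exact Finset.sum_congr rfl fun i _ => map_zsmul mkI _ _
      show mkI x ∈ Submodule.span (ZMod p) (Set.range g)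
      rw [heq2]
      refine Submodule.sum_mem _ fun i _ => ?_
      refine zsmul_mem (Submodule.subset_span ?_) _
      exact ⟨i, rfl⟩
    calc Nat.card Sbar ≤ Nat.card ↥(Submodule.span (ZMod p) (Set.range g)) := by
          refine Nat.card_le_card_of_injective
            (fun s : Sbar => (⟨s.1, hle s.1 s.2⟩ : ↥(Submodule.span (ZMod p) (Set.range g))))
            (fun s t h => by
              apply Subtype.ext
              have h2 := congrArg Subtype.val h
              simpa using h2)
      _ ≤ p ^ r := by
          letI : Fintype R := Fintype.ofFinite R
          have h1 : Nat.card ↥(Submodule.span (ZMod p) (Set.range g)) =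
              (Fintype.card (ZMod p)) ^ finrank (ZMod p) ↥(Submodule.span (ZMod p) (Set.range g)) := by
            rw [Nat.card_eq_fintype_card]
            exact card_eq_pow_finrank
          rw [h1, ZMod.card]
          refine Nat.pow_le_pow_right hp.pos ?_
          refine le_trans (finrank_span_le_card _) ?_
          rw [Set.toFinset_range]
          refine le_trans Finset.card_image_le ?_
          simp [hr, Module.finrank_eq_card_chooseBasisIndex]
  have hrangecard : Nat.card φ.range ≤ p ^ r :=
    le_trans (AddSubgroup.card_le_of_le hrange) hSbarcard
  -- final arithmetic
  set a := p ^ (N * r) with ha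
  set bJ := Ideal.absNorm J with hbJ
  set cim := Nat.card φ.range with hcim
  set ckφ := Nat.card φ.ker with hckφ
  set ckπ := Nat.card π.toAddMonoidHom.ker with hckπ
  have e1 : a = cim * ckφ := hcardR ▸ hcount1
  have e2 : a = bJ * ckπ := hcardR ▸ hcount2
  have e3 : a ≤ cim * ckπ := e1 ▸ Nat.mul_le_mul_left cim hkercard
  have e4 : bJ ≤ cim := by
    have h5 : a * bJ ≤ cim * a := by
      calc a * bJ ≤ (cim * ckπ) * bJ := Nat.mul_le_mul_right bJ e3
        _ = cim * (bJ * ckπ) := by ring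
        _ = cim * a := by rw [← e2]
    have ha0 : 0 < a := Nat.pos_of_ne_zero hpow0
    have := Nat.le_of_mul_le_mul_left (by linarith [h5] : a * bJ ≤ a * cim) ha0
    exact this
  have e5 : p ^ (N * r) ≤ p ^ (r * q) := by
    calc p ^ (N * r) ≤ bJ ^ q := hnormJq
      _ ≤ (p ^ r) ^ q := Nat.pow_le_pow_left (le_trans e4 hrangecard) q
      _ = p ^ (r * q) := by rw [← pow_mul]
  have e6 : N * r ≤ r * q := (Nat.pow_le_pow_iff_right hp.one_lt).mp e5
  have hNq : N ≤ q := by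
    have : r * N ≤ r * q := by linarith [e6]
    exact Nat.le_of_mul_le_mul_left this hr0
  have hqN : q ≤ N := Nat.le_of_dvd hN0 hqdvd
  have : Monoid.exponent Γ = Nat.card Γ := by
    rw [hq, Nat.card_eq_fintype_card, ← hN]
    omega
  exact IsCyclic.of_exponent_eq_card this
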